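/- Under the stated assumptions, the function Q has simple poles with the following residues: at p₁ the residue is i − m₁; at p₁ + πi and at p₁ − 2πi the residue is −m₂; at p₁ − πi and at p₁ + 2πi the residue is −m₃; at −p₁ + πi and at −p₁ − 2πi the residue is −(i − m₁); at −p₁ the residue is m₂; and at −p₁ − πi and at −p₁ + 2πi the residue is m₃. (Each residue is understood as the limit of (w − a)·Q(w) as w → a, w ≠ a.) -/

import Mathlib

open Complex Filter Topology

/-- The complex hyperbolic cotangent. -/
noncomputable def Complex.coth (z : ℂ) : ℂ := Complex.cosh z / Complex.sinh z

lemma csinh_eq_zero_iff (z : ℂ) : Complex.sinh z = 0 ↔ ∃ n : ℤ, z = n * Real.pi * I := by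
  have h : Complex.sinh z = 0 ↔ Complex.sin (z * I) = 0 := by
    rw [Complex.sin_mul_I, mul_eq_zero]; simp [Complex.I_ne_zero]
  rw [h, Complex.sin_eq_zero_iff]
  constructor
  · rintro ⟨n, hn⟩
    refine ⟨-n, ?_⟩
    have h2 : z * I * I = (n : ℂ) * Real.pi * I := by rw [hn]
    rw [mul_assoc, Complex.I_mul_I, mul_neg_one] at h2
    push_cast
    linear_combination -h2
  · rintro ⟨n, hn⟩
    refine ⟨-n, ?_⟩
    rw [hn]; push_cast; ring_nf; rw [Complex.I_sq]; ring

lemma coth_add_pi_I (z : ℂ) : Complex.coth (z + Real.pi * I) = Complex.coth z := by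
  unfold Complex.coth
  rw [Complex.cosh_add, Complex.sinh_add, Complex.cosh_mul_I, Complex.sinh_mul_I]
  simp only [Complex.cos_pi, Complex.sin_pi]
  ring_nf

lemma coth_add_zero' (z : ℂ) : Complex.coth (z + 0) = Complex.coth z := by rw [add_zero]

lemma coth_add_neg_pi_I (z : ℂ) : Complex.coth (z + -(Real.pi * I)) = Complex.coth z := by
  have := coth_add_pi_I (z + -(Real.pi * I))
  simpa using this.symm

lemma tendsto_coth_res (a : ℂ) :
    Tendsto (fun w => (w - a) * Complex.coth ((w - a)/3)) (𝓝[≠] a) (𝓝 3) := by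
  have hslope : Tendsto (fun u : ℂ => Complex.sinh u / u) (𝓝[≠] (0:ℂ)) (𝓝 1) := by
    have h := (Complex.hasDerivAt_sinh 0)
    rw [hasDerivAt_iff_tendsto_slope] at h
    simp only [Complex.cosh_zero] at h
    refine h.congr' ?_
    filter_upwards [self_mem_nhdsWithin] with u hu
    simp [slope_def_field, Complex.sinh_zero]
  have hinv : Tendsto (fun u : ℂ => u / Complex.sinh u) (𝓝[≠] (0:ℂ)) (𝓝 1) := by
    have := hslope.inv₀ one_ne_zero
    simpa [inv_div] using this
  have hcosh : Tendsto (fun u : ℂ => Complex.cosh u) (𝓝[≠] (0:ℂ)) (𝓝 1) := by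
    have h1 : ContinuousAt Complex.cosh 0 := Complex.continuous_cosh.continuousAt
    have h2 := h1.continuousWithinAt (s := {(0:ℂ)}ᶜ)
    simpa [ContinuousWithinAt, Complex.cosh_zero] using h2
  have hmap : Tendsto (fun w : ℂ => (w - a)/3) (𝓝[≠] a) (𝓝[≠] (0:ℂ)) := by
    apply Tendsto.inf
    · have : Tendsto (fun w : ℂ => (w - a)/3) (𝓝 a) (𝓝 ((a - a)/3)) :=
        ((continuous_id.sub continuous_const).div_const 3).tendsto a
      simpa using this
    · refine tendsto_principal_principal.2 fun w hw h => ?_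
      simp only [Set.mem_compl_iff, Set.mem_singleton_iff] at *
      apply hw
      have h3 : w - a = 0 := by
        rcases div_eq_zero_iff.mp h with h' | h'
        · exact h'
        · norm_num at h'
      linear_combination h3
  have hmain : Tendsto (fun w : ℂ => 3 * (((w - a)/3) / Complex.sinh ((w - a)/3)) *
      Complex.cosh ((w - a)/3)) (𝓝[≠] a) (𝓝 3) := by
    have := (((tendsto_const_nhds (x := (3:ℂ))).mul (hinv.comp hmap)).mul (hcosh.comp hmap))
    simpa using this
  refine hmain.congr fun w => ?_
  simp only [Complex.coth, div_eq_mul_inv]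
  ring

lemma contAt_term (c b a : ℂ) (h : Complex.sinh ((a - b)/3) ≠ 0) :
    ContinuousAt (fun w => c * Complex.coth ((w - b)/3)) a := by
  apply ContinuousAt.mul continuousAt_const
  have h1 : ContinuousAt (fun w : ℂ => (w - b)/3) a :=
    ((continuous_id.sub continuous_const).div_const 3).continuousAt
  have h2 : ContinuousAt Complex.coth ((a - b)/3) := by
    unfold Complex.coth
    exact (Complex.continuous_cosh.continuousAt).div (Complex.continuous_sinh.continuousAt) h
  exact ContinuousAt.comp (x := a) h2 h1

lemma key_res (a c : ℂ) (s : ℂ) (hs : ∀ z : ℂ, Complex.coth (z + s) = Complex.coth z)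
    (Q R : ℂ → ℂ) (hR : ContinuousAt R a)
    (hQeq : ∀ w : ℂ, Q w = c/3 * Complex.coth ((w - a)/3 + s) + R w) :
    Tendsto (fun w => (w - a) * Q w) (𝓝[≠] a) (𝓝 c) := by
  have h1 : Tendsto (fun w : ℂ => c/3 * ((w - a) * Complex.coth ((w - a)/3))) (𝓝[≠] a)
      (𝓝 (c/3 * 3)) := (tendsto_const_nhds (x := c/3)).mul (tendsto_coth_res a)
  have h2' : ContinuousAt (fun w : ℂ => (w - a) * R w) a :=
    (continuousAt_id.sub continuousAt_const).mul hR
  have h2 : Tendsto (fun w : ℂ => (w - a) * R w) (𝓝[≠] a) (𝓝 0) := by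
    have := h2'.continuousWithinAt (s := {a}ᶜ)
    simpa [ContinuousWithinAt] using this
  have h3 := h1.add h2
  have hc : c/3*3 + 0 = c := by ring
  rw [hc] at h3
  refine h3.congr fun w => ?_
  rw [hQeq w, hs]
  ring

lemma sinh3_cross (u : ℂ) (h : u.re ≠ 0) : Complex.sinh (u/3) ≠ 0 := by
  rw [Ne, csinh_eq_zero_iff]
  rintro ⟨n, hn⟩
  apply h
  have h2 : u = 3 * ((n:ℂ) * Real.pi * I) := by
    field_simp at hn
    linear_combination hn
  have := congrArg Complex.re h2
  simpa using this

lemma sinh3_c' (p : ℂ) (hre : p.re ≠ 0) (ε : ℝ) (hε : ε ≠ 0) (r : ℝ) (u : ℂ)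
    (hu : u = (ε:ℂ)*p + (r:ℂ)*I) : Complex.sinh (u/3) ≠ 0 := by
  apply sinh3_cross
  rw [hu]
  simp [Complex.add_re, Complex.mul_re, Complex.ofReal_re, Complex.ofReal_im,
    Complex.I_re, Complex.I_im, hre, hε]

lemma sinh3_im (k : ℤ) (hk : ¬ (3 ∣ k)) : Complex.sinh (((k:ℂ) * Real.pi * I)/3) ≠ 0 := by
  rw [Ne, csinh_eq_zero_iff]
  rintro ⟨n, hn⟩
  apply hk
  have him := congrArg Complex.im hn
  simp at him
  have hpi := Real.pi_ne_zero
  have h1 : (k:ℝ) * Real.pi = (3 * n) * Real.pi := by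
    field_simp at him
    linear_combination Real.pi * him
  have h2 : (k:ℝ) = 3*n := mul_right_cancel₀ hpi h1
  have : k = 3*n := by exact_mod_cast h2
  exact ⟨n, this⟩

lemma sinh3_i' (k : ℤ) (hk : ¬(3 ∣ k)) (u : ℂ) (hu : u = (k:ℂ)*Real.pi*I) :
    Complex.sinh (u/3) ≠ 0 := by rw [hu]; exact sinh3_im k hk

theorem residues_of_Q
    (ω : ℂ) (hω : 0 < ω.im) (k : ℝ) (hk : 0 < k)
    (p₁ : ℂ) (hp : Complex.sinh p₁ = I * k / ω) (hc : Complex.cosh p₁ ≠ 0)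
    (hre : p₁.re ≠ 0)
    (m₁ m₂ m₃ : ℂ)
    (hm₁ : m₁ = -p₁ / (3 * Real.pi) + I / 6)
    (hm₂ : m₂ = -p₁ / (3 * Real.pi) - I / 6)
    (hm₃ : m₃ = -p₁ / (3 * Real.pi) + I / 2)
    (Q : ℂ → ℂ)
    (hQ : ∀ w : ℂ, Q w =
      ((I - m₁) / 3) * Complex.coth ((w - p₁) / 3)
      - (m₂ / 3) * Complex.coth ((w - p₁ - Real.pi * I) / 3)
      - (m₃ / 3) * Complex.coth ((w - p₁ + Real.pi * I) / 3)
      - ((I - m₁) / 3) * Complex.coth ((w + p₁ - Real.pi * I) / 3)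
      + (m₂ / 3) * Complex.coth ((w + p₁) / 3)
      + (m₃ / 3) * Complex.coth ((w + p₁ + Real.pi * I) / 3)) :
    Tendsto (fun w => (w - p₁) * Q w) (𝓝[≠] p₁) (𝓝 (I - m₁)) ∧
    Tendsto (fun w => (w - (p₁ + Real.pi * I)) * Q w) (𝓝[≠] (p₁ + Real.pi * I)) (𝓝 (-m₂)) ∧
    Tendsto (fun w => (w - (p₁ - 2 * Real.pi * I)) * Q w) (𝓝[≠] (p₁ - 2 * Real.pi * I)) (𝓝 (-m₂)) ∧
    Tendsto (fun w => (w - (p₁ - Real.pi * I)) * Q w) (𝓝[≠] (p₁ - Real.pi * I)) (𝓝 (-m₃)) ∧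
    Tendsto (fun w => (w - (p₁ + 2 * Real.pi * I)) * Q w) (𝓝[≠] (p₁ + 2 * Real.pi * I)) (𝓝 (-m₃)) ∧
    Tendsto (fun w => (w - (-p₁ + Real.pi * I)) * Q w) (𝓝[≠] (-p₁ + Real.pi * I)) (𝓝 (-(I - m₁))) ∧
    Tendsto (fun w => (w - (-p₁ - 2 * Real.pi * I)) * Q w) (𝓝[≠] (-p₁ - 2 * Real.pi * I)) (𝓝 (-(I - m₁))) ∧
    Tendsto (fun w => (w - (-p₁)) * Q w) (𝓝[≠] (-p₁)) (𝓝 m₂) ∧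
    Tendsto (fun w => (w - (-p₁ - Real.pi * I)) * Q w) (𝓝[≠] (-p₁ - Real.pi * I)) (𝓝 m₃) ∧
    Tendsto (fun w => (w - (-p₁ + 2 * Real.pi * I)) * Q w) (𝓝[≠] (-p₁ + 2 * Real.pi * I)) (𝓝 m₃) := by
  refine ⟨?_, ?_, ?_, ?_, ?_, ?_, ?_, ?_, ?_, ?_⟩
  · refine key_res p₁ (I - m₁) 0 coth_add_zero' Q
      (fun w => (-(m₂/3)) * Complex.coth ((w - (p₁ + Real.pi * I))/3)
        + (-(m₃/3)) * Complex.coth ((w - (p₁ - Real.pi * I))/3)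
        + (-((I - m₁)/3)) * Complex.coth ((w - (-p₁ + Real.pi * I))/3)
        + ((m₂/3)) * Complex.coth ((w - (-p₁))/3)
        + ((m₃/3)) * Complex.coth ((w - (-p₁ - Real.pi * I))/3)) ?_ ?_
    · exact (((((contAt_term _ _ _ (sinh3_i' (-1) (by decide) _ (by push_cast; ring))).add (contAt_term _ _ _ (sinh3_i' (1) (by decide) _ (by push_cast; ring)))).add (contAt_term _ _ _ (sinh3_c' p₁ hre (2) (by norm_num) (-Real.pi) _ (by push_cast; ring)))).add (contAt_term _ _ _ (sinh3_c' p₁ hre (2) (by norm_num) (0) _ (by push_cast; ring)))).add (contAt_term _ _ _ (sinh3_c' p₁ hre (2) (by norm_num) (Real.pi) _ (by push_cast; ring))))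
    · intro w
      rw [hQ w]
      ring_nf
  · refine key_res (p₁ + Real.pi * I) (-m₂) 0 coth_add_zero' Q
      (fun w => ((I - m₁)/3) * Complex.coth ((w - p₁)/3)
        + (-(m₃/3)) * Complex.coth ((w - (p₁ - Real.pi * I))/3)
        + (-((I - m₁)/3)) * Complex.coth ((w - (-p₁ + Real.pi * I))/3)
        + ((m₂/3)) * Complex.coth ((w - (-p₁))/3)
        + ((m₃/3)) * Complex.coth ((w - (-p₁ - Real.pi * I))/3)) ?_ ?_
    · exact (((((contAt_term _ _ _ (sinh3_i' (1) (by decide) _ (by push_cast; ring))).add (contAt_term _ _ _ (sinh3_i' (2) (by decide) _ (by push_cast; ring)))).add (contAt_term _ _ _ (sinh3_c' p₁ hre (2) (by norm_num) (0) _ (by push_cast; ring)))).add (contAt_term _ _ _ (sinh3_c' p₁ hre (2) (by norm_num) (Real.pi) _ (by push_cast; ring)))).add (contAt_term _ _ _ (sinh3_c' p₁ hre (2) (by norm_num) (2*Real.pi) _ (by push_cast; ring))))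
    · intro w
      rw [hQ w]
      ring_nf
  · refine key_res (p₁ - 2 * Real.pi * I) (-m₂) (-(Real.pi * I)) coth_add_neg_pi_I Q
      (fun w => ((I - m₁)/3) * Complex.coth ((w - p₁)/3)
        + (-(m₃/3)) * Complex.coth ((w - (p₁ - Real.pi * I))/3)
        + (-((I - m₁)/3)) * Complex.coth ((w - (-p₁ + Real.pi * I))/3)
        + ((m₂/3)) * Complex.coth ((w - (-p₁))/3)
        + ((m₃/3)) * Complex.coth ((w - (-p₁ - Real.pi * I))/3)) ?_ ?_
    · exact (((((contAt_term _ _ _ (sinh3_i' (-2) (by decide) _ (by push_cast; ring))).add (contAt_term _ _ _ (sinh3_i' (-1) (by decide) _ (by push_cast; ring)))).add (contAt_term _ _ _ (sinh3_c' p₁ hre (2) (by norm_num) (-(3*Real.pi)) _ (by push_cast; ring)))).add (contAt_term _ _ _ (sinh3_c' p₁ hre (2) (by norm_num) (-(2*Real.pi)) _ (by push_cast; ring)))).add (contAt_term _ _ _ (sinh3_c' p₁ hre (2) (by norm_num) (-Real.pi) _ (by push_cast; ring))))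
    · intro w
      rw [hQ w]
      ring_nf
  · refine key_res (p₁ - Real.pi * I) (-m₃) 0 coth_add_zero' Q
      (fun w => ((I - m₁)/3) * Complex.coth ((w - p₁)/3)
        + (-(m₂/3)) * Complex.coth ((w - (p₁ + Real.pi * I))/3)
        + (-((I - m₁)/3)) * Complex.coth ((w - (-p₁ + Real.pi * I))/3)
        + ((m₂/3)) * Complex.coth ((w - (-p₁))/3)
        + ((m₃/3)) * Complex.coth ((w - (-p₁ - Real.pi * I))/3)) ?_ ?_
    · exact (((((contAt_term _ _ _ (sinh3_i' (-1) (by decide) _ (by push_cast; ring))).add (contAt_term _ _ _ (sinh3_i' (-2) (by decide) _ (by push_cast; ring)))).add (contAt_term _ _ _ (sinh3_c' p₁ hre (2) (by norm_num) (-(2*Real.pi)) _ (by push_cast; ring)))).add (contAt_term _ _ _ (sinh3_c' p₁ hre (2) (by norm_num) (-Real.pi) _ (by push_cast; ring)))).add (contAt_term _ _ _ (sinh3_c' p₁ hre (2) (by norm_num) (0) _ (by push_cast; ring))))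
    · intro w
      rw [hQ w]
      ring_nf
  · refine key_res (p₁ + 2 * Real.pi * I) (-m₃) (Real.pi * I) coth_add_pi_I Q
      (fun w => ((I - m₁)/3) * Complex.coth ((w - p₁)/3)
        + (-(m₂/3)) * Complex.coth ((w - (p₁ + Real.pi * I))/3)
        + (-((I - m₁)/3)) * Complex.coth ((w - (-p₁ + Real.pi * I))/3)
        + ((m₂/3)) * Complex.coth ((w - (-p₁))/3)
        + ((m₃/3)) * Complex.coth ((w - (-p₁ - Real.pi * I))/3)) ?_ ?_
    · exact (((((contAt_term _ _ _ (sinh3_i' (2) (by decide) _ (by push_cast; ring))).add (contAt_term _ _ _ (sinh3_i' (1) (by decide) _ (by push_cast; ring)))).add (contAt_term _ _ _ (sinh3_c' p₁ hre (2) (by norm_num) (Real.pi) _ (by push_cast; ring)))).add (contAt_term _ _ _ (sinh3_c' p₁ hre (2) (by norm_num) (2*Real.pi) _ (by push_cast; ring)))).add (contAt_term _ _ _ (sinh3_c' p₁ hre (2) (by norm_num) (3*Real.pi) _ (by push_cast; ring))))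
    · intro w
      rw [hQ w]
      ring_nf
  · refine key_res (-p₁ + Real.pi * I) (-(I - m₁)) 0 coth_add_zero' Q
      (fun w => ((I - m₁)/3) * Complex.coth ((w - p₁)/3)
        + (-(m₂/3)) * Complex.coth ((w - (p₁ + Real.pi * I))/3)
        + (-(m₃/3)) * Complex.coth ((w - (p₁ - Real.pi * I))/3)
        + ((m₂/3)) * Complex.coth ((w - (-p₁))/3)
        + ((m₃/3)) * Complex.coth ((w - (-p₁ - Real.pi * I))/3)) ?_ ?_
    · exact (((((contAt_term _ _ _ (sinh3_c' p₁ hre (-2) (by norm_num) (Real.pi) _ (by push_cast; ring))).add (contAt_term _ _ _ (sinh3_c' p₁ hre (-2) (by norm_num) (0) _ (by push_cast; ring)))).add (contAt_term _ _ _ (sinh3_c' p₁ hre (-2) (by norm_num) (2*Real.pi) _ (by push_cast; ring)))).add (contAt_term _ _ _ (sinh3_i' (1) (by decide) _ (by push_cast; ring)))).add (contAt_term _ _ _ (sinh3_i' (2) (by decide) _ (by push_cast; ring))))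
    · intro w
      rw [hQ w]
      ring_nf
  · refine key_res (-p₁ - 2 * Real.pi * I) (-(I - m₁)) (-(Real.pi * I)) coth_add_neg_pi_I Q
      (fun w => ((I - m₁)/3) * Complex.coth ((w - p₁)/3)
        + (-(m₂/3)) * Complex.coth ((w - (p₁ + Real.pi * I))/3)
        + (-(m₃/3)) * Complex.coth ((w - (p₁ - Real.pi * I))/3)
        + ((m₂/3)) * Complex.coth ((w - (-p₁))/3)
        + ((m₃/3)) * Complex.coth ((w - (-p₁ - Real.pi * I))/3)) ?_ ?_
    · exact (((((contAt_term _ _ _ (sinh3_c' p₁ hre (-2) (by norm_num) (-(2*Real.pi)) _ (by push_cast; ring))).add (contAt_term _ _ _ (sinh3_c' p₁ hre (-2) (by norm_num) (-(3*Real.pi)) _ (by push_cast; ring)))).add (contAt_term _ _ _ (sinh3_c' p₁ hre (-2) (by norm_num) (-Real.pi) _ (by push_cast; ring)))).add (contAt_term _ _ _ (sinh3_i' (-2) (by decide) _ (by push_cast; ring)))).add (contAt_term _ _ _ (sinh3_i' (-1) (by decide) _ (by push_cast; ring))))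
    · intro w
      rw [hQ w]
      ring_nf
  · refine key_res (-p₁) m₂ 0 coth_add_zero' Q
      (fun w => ((I - m₁)/3) * Complex.coth ((w - p₁)/3)
        + (-(m₂/3)) * Complex.coth ((w - (p₁ + Real.pi * I))/3)
        + (-(m₃/3)) * Complex.coth ((w - (p₁ - Real.pi * I))/3)
        + (-((I - m₁)/3)) * Complex.coth ((w - (-p₁ + Real.pi * I))/3)
        + ((m₃/3)) * Complex.coth ((w - (-p₁ - Real.pi * I))/3)) ?_ ?_
    · exact (((((contAt_term _ _ _ (sinh3_c' p₁ hre (-2) (by norm_num) (0) _ (by push_cast; ring))).add (contAt_term _ _ _ (sinh3_c' p₁ hre (-2) (by norm_num) (-Real.pi) _ (by push_cast; ring)))).add (contAt_term _ _ _ (sinh3_c' p₁ hre (-2) (by norm_num) (Real.pi) _ (by push_cast; ring)))).add (contAt_term _ _ _ (sinh3_i' (-1) (by decide) _ (by push_cast; ring)))).add (contAt_term _ _ _ (sinh3_i' (1) (by decide) _ (by push_cast; ring))))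
    · intro w
      rw [hQ w]
      ring_nf
  · refine key_res (-p₁ - Real.pi * I) m₃ 0 coth_add_zero' Q
      (fun w => ((I - m₁)/3) * Complex.coth ((w - p₁)/3)
        + (-(m₂/3)) * Complex.coth ((w - (p₁ + Real.pi * I))/3)
        + (-(m₃/3)) * Complex.coth ((w - (p₁ - Real.pi * I))/3)
        + (-((I - m₁)/3)) * Complex.coth ((w - (-p₁ + Real.pi * I))/3)
        + ((m₂/3)) * Complex.coth ((w - (-p₁))/3)) ?_ ?_
    · exact (((((contAt_term _ _ _ (sinh3_c' p₁ hre (-2) (by norm_num) (-Real.pi) _ (by push_cast; ring))).add (contAt_term _ _ _ (sinh3_c' p₁ hre (-2) (by norm_num) (-(2*Real.pi)) _ (by push_cast; ring)))).add (contAt_term _ _ _ (sinh3_c' p₁ hre (-2) (by norm_num) (0) _ (by push_cast; ring)))).add (contAt_term _ _ _ (sinh3_i' (-2) (by decide) _ (by push_cast; ring)))).add (contAt_term _ _ _ (sinh3_i' (-1) (by decide) _ (by push_cast; ring))))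
    · intro w
      rw [hQ w]
      ring_nf
  · refine key_res (-p₁ + 2 * Real.pi * I) m₃ (Real.pi * I) coth_add_pi_I Q
      (fun w => ((I - m₁)/3) * Complex.coth ((w - p₁)/3)
        + (-(m₂/3)) * Complex.coth ((w - (p₁ + Real.pi * I))/3)
        + (-(m₃/3)) * Complex.coth ((w - (p₁ - Real.pi * I))/3)
        + (-((I - m₁)/3)) * Complex.coth ((w - (-p₁ + Real.pi * I))/3)
        + ((m₂/3)) * Complex.coth ((w - (-p₁))/3)) ?_ ?_
    · exact (((((contAt_term _ _ _ (sinh3_c' p₁ hre (-2) (by norm_num) (2*Real.pi) _ (by push_cast; ring))).add (contAt_term _ _ _ (sinh3_c' p₁ hre (-2) (by norm_num) (Real.pi) _ (by push_cast; ring)))).add (contAt_term _ _ _ (sinh3_c' p₁ hre (-2) (by norm_num) (3*Real.pi) _ (by push_cast; ring)))).add (contAt_term _ _ _ (sinh3_i' (1) (by decide) _ (by push_cast; ring)))).add (contAt_term _ _ _ (sinh3_i' (2) (by decide) _ (by push_cast; ring))))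
    · intro w
      rw [hQ w]
      ring_nf
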